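/- Suppose η = +1 (call case) and the European values are strictly positive: e_k(x) > 0 for every k < n and x ∈ C. Define f* : {0,…,n−1} × Ξ(C) → [0,∞] by f*(k,ξ) := inf{ α(x) : x ∈ S_k and Ξ(x) = ξ }, with the convention inf ∅ := ∞. Then the map x ↦ (α(x), Ξ(x)) is a homeomorphism from C onto (0,∞) × Ξ(C), and for every k < n the stopping region satisfies S_k = { x ∈ C : f*(k, Ξ(x)) ≤ α(x) }, the inequality being taken in [0,∞]. -/

import Mathlib

open MeasureTheory ProbabilityTheory
open scoped ENNReal NNReal

/-- The ambient space `ℝ^{d₁} × ℝ^{d₂} × ℝ^{d₃}` for the state `x = (s, y, z)`. -/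
abbrev StateSpace (d₁ d₂ d₃ : ℕ) : Type :=
  (Fin d₁ → ℝ) × (Fin d₂ → ℝ) × (Fin d₃ → ℝ)

/-- Call case (`η = +1`): suppose the European values are strictly
positive, `e_k(x) > 0` for every `k < n` and `x ∈ C`.  With the latent coordinate map
`Ξ(x) := (s/α(x), y, z/α(x))` and `f*(k,ξ) := inf{α(x) : x ∈ S_k, Ξ(x) = ξ}` (with
`inf ∅ := ∞`), the map `x ↦ (α(x), Ξ(x))` is a homeomorphism from `C` onto
`(0,∞) × Ξ(C)`, and for every `k < n` the stopping region satisfies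
`S_k = { x ∈ C : f*(k, Ξ(x)) ≤ α(x) }`, the inequality being taken in `[0,∞]`. -/
theorem stmt_5
    {d₁ d₂ d₃ : ℕ}
    (C : Set (StateSpace d₁ d₂ d₃)) (hCmeas : MeasurableSet C)
    (scale : ℝ → StateSpace d₁ d₂ d₃ → StateSpace d₁ d₂ d₃)
    (hscale : ∀ γ x, scale γ x = (γ • x.1, x.2.1, γ • x.2.2))
    (hC : ∀ γ > (0 : ℝ), ∀ x ∈ C, scale γ x ∈ C)
    (n : ℕ) (hn : 1 ≤ n) (t : ℕ → ℝ) (ht : ∀ i < n, t i < t (i + 1))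
    (a : ℝ) (ha : 0 < a)
    (La : Set (StateSpace d₁ d₂ d₃ → ℝ))
    (hLa : La = {ψ | ContinuousOn ψ C ∧
      ∃ c > 0, ∀ x ∈ C, |ψ x| ≤ c * (1 + ‖x‖ ^ a)})
    (α β : StateSpace d₁ d₂ d₃ → ℝ)
    (hαc : ContinuousOn α C) (hαpos : ∀ x ∈ C, 0 < α x)
    (hαhom : ∀ γ > (0 : ℝ), ∀ x ∈ C, α (scale γ x) = γ * α x)
    (hβc : ContinuousOn β C) (hβnn : ∀ x ∈ C, 0 ≤ β x)
    (hβhom : ∀ γ > (0 : ℝ), ∀ x ∈ C, β (scale γ x) = γ * β x)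
    (K r η : ℝ) (hK : 0 < K) (hr : 0 ≤ r) (hη : η = 1)
    (φ : ℕ → StateSpace d₁ d₂ d₃ → ℝ)
    (hφdef : ∀ k ≤ n, ∀ x ∈ C,
      φ k x = Real.exp (-(r * t k)) * max (η * (α x - β x - K)) 0)
    (hφLa : ∀ k ≤ n, φ k ∈ La)
    (κ : ℕ → Kernel (StateSpace d₁ d₂ d₃) (StateSpace d₁ d₂ d₃))
    (hκ : ∀ k, IsMarkovKernel (κ k))
    (hκC : ∀ k < n, ∀ x ∈ C, (κ k) x Cᶜ = 0)
    (hgc : ∀ k < n, ∀ ψ ∈ La,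
      (∀ x ∈ C, Integrable ψ ((κ k) x)) ∧
      (fun x => ∫ y, ψ y ∂((κ k) x)) ∈ La)
    (hκscale : ∀ k < n, ∀ γ > (0 : ℝ), ∀ x ∈ C,
      Measure.map (scale γ) ((κ k) x) = (κ k) (scale γ x))
    (v : ℕ → StateSpace d₁ d₂ d₃ → ℝ)
    (hvn : ∀ x ∈ C, v n x = φ n x)
    (hv : ∀ k < n, ∀ x ∈ C, v k x = max (φ k x) (∫ y, v (k + 1) y ∂((κ k) x)))
    (e : ℕ → StateSpace d₁ d₂ d₃ → ℝ)
    (hen : ∀ x ∈ C, e n x = φ n x)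
    (he : ∀ k < n, ∀ x ∈ C, e k x = ∫ y, e (k + 1) y ∂((κ k) x))
    (hepos : ∀ k < n, ∀ x ∈ C, 0 < e k x)
    (S : ℕ → Set (StateSpace d₁ d₂ d₃))
    (hS : ∀ k, S k = {x | x ∈ C ∧ v k x = φ k x})
    (Ξ : StateSpace d₁ d₂ d₃ → StateSpace d₁ d₂ d₃)
    (hΞ : ∀ x ∈ C, Ξ x = scale (α x)⁻¹ x)
    (fstar : ℕ → StateSpace d₁ d₂ d₃ → ℝ≥0∞)
    (hfstar : ∀ k < n, ∀ ξ, fstar k ξ =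
      sInf ((fun x => ENNReal.ofReal (α x)) '' {x | x ∈ S k ∧ Ξ x = ξ})) :
    (∃ H : ↥C ≃ₜ ↥(Set.Ioi (0 : ℝ) ×ˢ (Ξ '' C)),
      ∀ x : ↥C, (H x : ℝ × StateSpace d₁ d₂ d₃) = (α ↑x, Ξ ↑x)) ∧
    (∀ k < n, S k = {x | x ∈ C ∧ fstar k (Ξ x) ≤ ENNReal.ofReal (α x)}) := by
  -- basic scale facts
  have hscale1 : ∀ x, scale 1 x = x := by
    intro x; rw [hscale]; simp
  have hscalemul : ∀ γ δ x, scale γ (scale δ x) = scale (γ * δ) x := by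
    intro γ δ x; simp only [hscale, smul_smul]
  have hscont : Continuous fun p : ℝ × StateSpace d₁ d₂ d₃ => scale p.1 p.2 := by
    have : (fun p : ℝ × StateSpace d₁ d₂ d₃ => scale p.1 p.2)
        = fun p : ℝ × StateSpace d₁ d₂ d₃ => (p.1 • p.2.1, p.2.2.1, p.1 • p.2.2.2) := by
      funext p; rw [hscale]
    rw [this]; fun_prop
  have hscontγ : ∀ γ : ℝ, Continuous (scale γ) := by
    intro γ
    exact hscont.comp (Continuous.prodMk continuous_const continuous_id)
  have hΞC : ∀ x ∈ C, Ξ x ∈ C := by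
    intro x hx; rw [hΞ x hx]
    exact hC _ (inv_pos.2 (hαpos x hx)) x hx
  have hαΞ : ∀ x ∈ C, α (Ξ x) = 1 := by
    intro x hx; rw [hΞ x hx, hαhom _ (inv_pos.2 (hαpos x hx)) x hx]
    exact inv_mul_cancel₀ (hαpos x hx).ne'
  have hxrec : ∀ x ∈ C, scale (α x) (Ξ x) = x := by
    intro x hx
    rw [hΞ x hx, hscalemul, mul_inv_cancel₀ (hαpos x hx).ne', hscale1]
  have hΞscale : ∀ γ > (0:ℝ), ∀ x ∈ C, Ξ (scale γ x) = Ξ x := by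
    intro γ hγ x hx
    rw [hΞ _ (hC γ hγ x hx), hαhom γ hγ x hx, hΞ x hx, hscalemul,
      mul_inv_rev, inv_mul_cancel_right₀ hγ.ne']
  have hΞΞ : ∀ x ∈ C, Ξ (Ξ x) = Ξ x := by
    intro x hx
    conv_lhs => rw [hΞ x hx]
    exact hΞscale _ (inv_pos.2 (hαpos x hx)) x hx
  -- membership in La
  have hLaMem : ∀ ψ : StateSpace d₁ d₂ d₃ → ℝ, ψ ∈ La ↔ ContinuousOn ψ C ∧
      ∃ c > 0, ∀ x ∈ C, |ψ x| ≤ c * (1 + ‖x‖ ^ a) := by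
    intro ψ; rw [hLa]; rfl
  have hLa_congr : ∀ ψ₁ ψ₂ : StateSpace d₁ d₂ d₃ → ℝ, ψ₁ ∈ La →
      (∀ x ∈ C, ψ₂ x = ψ₁ x) → ψ₂ ∈ La := by
    intro ψ₁ ψ₂ h1 heq
    rw [hLaMem] at h1 ⊢
    obtain ⟨hc, c, hc0, hb⟩ := h1
    exact ⟨hc.congr heq, c, hc0, fun x hx => (heq x hx) ▸ hb x hx⟩
  have hLa_max : ∀ ψ₁ ψ₂ : StateSpace d₁ d₂ d₃ → ℝ, ψ₁ ∈ La → ψ₂ ∈ La →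
      (fun x => max (ψ₁ x) (ψ₂ x)) ∈ La := by
    intro ψ₁ ψ₂ h1 h2
    rw [hLaMem] at h1 h2 ⊢
    obtain ⟨hc1, c1, hc10, hb1⟩ := h1
    obtain ⟨hc2, c2, hc20, hb2⟩ := h2
    refine ⟨hc1.sup hc2, c1 + c2, by linarith, fun x hx => ?_⟩
    have n1 : (0:ℝ) ≤ 1 + ‖x‖ ^ a := by positivity
    have := hb1 x hx; have := hb2 x hx
    have habs : |max (ψ₁ x) (ψ₂ x)| ≤ |ψ₁ x| + |ψ₂ x| := by
      rcases le_total (ψ₁ x) (ψ₂ x) with h | h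
      · rw [max_eq_right h]
        have := abs_nonneg (ψ₁ x); linarith [le_abs_self (ψ₂ x), neg_abs_le (ψ₂ x)]
      · rw [max_eq_left h]
        have := abs_nonneg (ψ₂ x); linarith [le_abs_self (ψ₁ x), neg_abs_le (ψ₁ x)]
    calc |max (ψ₁ x) (ψ₂ x)| ≤ |ψ₁ x| + |ψ₂ x| := habs
      _ ≤ c1 * (1 + ‖x‖ ^ a) + c2 * (1 + ‖x‖ ^ a) := by linarith
      _ = (c1 + c2) * (1 + ‖x‖ ^ a) := by ring
  -- a.e. membership in C
  have haeC : ∀ k < n, ∀ x ∈ C, ∀ᵐ y ∂((κ k) x), y ∈ C := by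
    intro k hk x hx
    rw [Filter.eventually_iff, mem_ae_iff]
    simpa [Set.compl_def] using hκC k hk x hx
  -- payoff scaling inequality
  have hφineq : ∀ k ≤ n, ∀ γ : ℝ, 1 ≤ γ → ∀ x ∈ C,
      φ k (scale γ x) ≤ γ * φ k x + (γ - 1) * K * Real.exp (-(r * t k)) := by
    intro k hk γ hγ x hx
    have hγ0 : (0:ℝ) < γ := lt_of_lt_of_le one_pos hγ
    rw [hφdef k hk _ (hC γ hγ0 x hx), hφdef k hk x hx, hη,
      hαhom γ hγ0 x hx, hβhom γ hγ0 x hx]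
    set E := Real.exp (-(r * t k)) with hE
    have hE0 : 0 < E := Real.exp_pos _
    set A := α x - β x with hA
    have hM : A - K ≤ max (1 * (A - K)) 0 := by
      simpa using le_max_left (A - K) 0
    have hM0 : 0 ≤ max (1 * (A - K)) 0 := le_max_right _ _
    have h1 : max (1 * (γ * α x - γ * β x - K)) 0 ≤ γ * max (1 * (A - K)) 0 + (γ - 1) * K := by
      apply max_le
      · have h2 : γ * (A - K) ≤ γ * max (1 * (A - K)) 0 :=
          mul_le_mul_of_nonneg_left hM hγ0.le
        have : 1 * (γ * α x - γ * β x - K) = γ * (A - K) + (γ - 1) * K := by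
          rw [hA]; ring
        rw [this]
        nlinarith
      · nlinarith
    calc E * max (1 * (γ * α x - γ * β x - K)) 0
        ≤ E * (γ * max (1 * (A - K)) 0 + (γ - 1) * K) :=
          mul_le_mul_of_nonneg_left h1 hE0.le
      _ = γ * (E * max (1 * (A - K)) 0) + (γ - 1) * K * E := by ring
  -- main downward induction
  have main : ∀ j k : ℕ, k + j = n →
      v k ∈ La ∧ (∀ x ∈ C, φ k x ≤ v k x) ∧ (∀ x ∈ C, e k x ≤ v k x) ∧ e k ∈ La ∧
      (∀ γ : ℝ, 1 ≤ γ → ∀ x ∈ C,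
        v k (scale γ x) ≤ γ * v k x + (γ - 1) * K * Real.exp (-(r * t k))) := by
    intro j
    induction j with
    | zero =>
      intro k hk
      have hkn : k = n := by omega
      subst hkn
      have hvLa : v k ∈ La := hLa_congr _ _ (hφLa k le_rfl) hvn
      have heLa : e k ∈ La := hLa_congr _ _ (hφLa k le_rfl) hen
      refine ⟨hvLa, fun x hx => (hvn x hx).ge, fun x hx => by rw [hen x hx, hvn x hx],
        heLa, fun γ hγ x hx => ?_⟩
      have hγ0 : (0:ℝ) < γ := lt_of_lt_of_le one_pos hγ
      rw [hvn _ (hC γ hγ0 x hx), hvn x hx]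
      exact hφineq k le_rfl γ hγ x hx
    | succ j IH =>
      intro k hkj
      have hk : k < n := by omega
      obtain ⟨hvLa', hφv', hev', heLa', hA'⟩ := IH (k + 1) (by omega)
      haveI := hκ k
      obtain ⟨hvint, hvcontLa⟩ := hgc k hk _ hvLa'
      obtain ⟨heint, hecontLa⟩ := hgc k hk _ heLa'
      have hvk : v k ∈ La := by
        refine hLa_congr (fun x => max (φ k x) (∫ y, v (k+1) y ∂((κ k) x))) _
          (hLa_max _ _ (hφLa k hk.le) hvcontLa) ?_
        exact fun x hx => hv k hk x hx
      have hφvk : ∀ x ∈ C, φ k x ≤ v k x := by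
        intro x hx; rw [hv k hk x hx]; exact le_max_left _ _
      have hevk : ∀ x ∈ C, e k x ≤ v k x := by
        intro x hx
        rw [he k hk x hx, hv k hk x hx]
        refine le_trans (integral_mono_ae (heint x hx) (hvint x hx) ?_) (le_max_right _ _)
        filter_upwards [haeC k hk x hx] with y hy using hev' y hy
      refine ⟨hvk, hφvk, hevk, hLa_congr _ _ hecontLa (he k hk), ?_⟩
      intro γ hγ x hx
      have hγ0 : (0:ℝ) < γ := lt_of_lt_of_le one_pos hγ
      have hγx : scale γ x ∈ C := hC γ hγ0 x hx
      set E := Real.exp (-(r * t k)) with hEdef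
      have hE0 : 0 < E := Real.exp_pos _
      set E' := Real.exp (-(r * t (k+1))) with hE'def
      have hE'E : E' ≤ E := by
        apply Real.exp_le_exp.2
        have := ht k hk
        nlinarith
      have hE'0 : 0 < E' := Real.exp_pos _
      -- rewrite the integral against the scaled kernel
      have hmeasv : AEStronglyMeasurable (v (k+1)) ((κ k) (scale γ x)) :=
        (hvint _ hγx).aestronglyMeasurable
      have hmap : ∫ y, v (k+1) y ∂((κ k) (scale γ x))
          = ∫ y, v (k+1) (scale γ y) ∂((κ k) x) := by
        rw [← hκscale k hk γ hγ0 x hx] at hmeasv ⊢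
        exact integral_map ((hscontγ γ).aemeasurable) hmeasv
      have hintcomp : Integrable (fun y => v (k+1) (scale γ y)) ((κ k) x) := by
        have hm : AEStronglyMeasurable (v (k+1)) (Measure.map (scale γ) ((κ k) x)) := by
          rw [hκscale k hk γ hγ0 x hx]; exact hmeasv
        have h := (integrable_map_measure hm ((hscontγ γ).aemeasurable)).1
        rw [hκscale k hk γ hγ0 x hx] at h
        exact h (hvint _ hγx)
      have hintrhs : Integrable (fun y => γ * v (k+1) y + (γ - 1) * K * E') ((κ k) x) :=
        ((hvint x hx).const_mul γ).add (integrable_const _)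
      have hintle : ∫ y, v (k+1) (scale γ y) ∂((κ k) x)
          ≤ γ * (∫ y, v (k+1) y ∂((κ k) x)) + (γ - 1) * K * E' := by
        have h1 : ∫ y, v (k+1) (scale γ y) ∂((κ k) x)
            ≤ ∫ y, (γ * v (k+1) y + (γ - 1) * K * E') ∂((κ k) x) := by
          refine integral_mono_ae hintcomp hintrhs ?_
          filter_upwards [haeC k hk x hx] with y hy using hA' γ hγ y hy
        refine h1.trans_eq ?_
        rw [integral_add ((hvint x hx).const_mul γ) (integrable_const _),
          integral_const]
        simp only [probReal_univ, measure_univ, ENNReal.toReal_one, one_smul]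
        rw [integral_const_mul]
      -- combine
      rw [hv k hk _ hγx, hv k hk x hx]
      apply max_le
      · refine (hφineq k hk.le γ hγ x hx).trans ?_
        have h3 : φ k x ≤ max (φ k x) (∫ y, v (k+1) y ∂((κ k) x)) := le_max_left _ _
        have h4 := mul_le_mul_of_nonneg_left h3 hγ0.le
        linarith
      · rw [hmap]
        refine hintle.trans ?_
        have h2 : ∫ y, v (k+1) y ∂((κ k) x)
            ≤ max (φ k x) (∫ y, v (k+1) y ∂((κ k) x)) := le_max_right _ _
        have h3 := mul_le_mul_of_nonneg_left h2 hγ0.le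
        have h4 : (γ - 1) * K * E' ≤ (γ - 1) * K * E :=
          mul_le_mul_of_nonneg_left hE'E (by nlinarith)
        linarith
  have hvLa : ∀ k ≤ n, v k ∈ La := fun k hk => (main (n - k) k (by omega)).1
  have hφv : ∀ k ≤ n, ∀ x ∈ C, φ k x ≤ v k x := fun k hk => (main (n - k) k (by omega)).2.1
  have hev : ∀ k ≤ n, ∀ x ∈ C, e k x ≤ v k x := fun k hk => (main (n - k) k (by omega)).2.2.1
  have hA : ∀ k ≤ n, ∀ γ : ℝ, 1 ≤ γ → ∀ x ∈ C,
      v k (scale γ x) ≤ γ * v k x + (γ - 1) * K * Real.exp (-(r * t k)) :=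
    fun k hk => (main (n - k) k (by omega)).2.2.2.2
  -- the stopping region is scaling-up-closed
  have hup : ∀ k < n, ∀ x ∈ S k, ∀ γ : ℝ, 1 ≤ γ → scale γ x ∈ S k := by
    intro k hk x hxS γ hγ
    have hγ0 : (0:ℝ) < γ := lt_of_lt_of_le one_pos hγ
    rw [hS k] at hxS ⊢
    obtain ⟨hxC, hvφ⟩ := hxS
    have hγx : scale γ x ∈ C := hC γ hγ0 x hxC
    refine ⟨hγx, ?_⟩
    set E := Real.exp (-(r * t k)) with hEdef
    have hE0 : 0 < E := Real.exp_pos _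
    -- the payoff at x is strictly positive
    have hφpos : 0 < φ k x :=
      lt_of_lt_of_le (hepos k hk x hxC) ((hev k hk.le x hxC).trans hvφ.le)
    have hAK : K < α x - β x := by
      by_contra hcon
      push_neg at hcon
      have : φ k x = 0 := by
        rw [hφdef k hk.le x hxC, hη]
        have : max (1 * (α x - β x - K)) 0 = 0 := by
          rw [one_mul]; apply max_eq_right; linarith
        rw [this, mul_zero]
      linarith
    have hφx : φ k x = E * (α x - β x - K) := by
      rw [hφdef k hk.le x hxC, hη]
      congr 1
      rw [one_mul]; apply max_eq_left; linarith
    have hφγx : φ k (scale γ x) = E * (γ * (α x - β x) - K) := by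
      rw [hφdef k hk.le _ hγx, hη, hαhom γ hγ0 x hxC, hβhom γ hγ0 x hxC]
      have h1 : γ * (α x - β x) ≥ α x - β x := by nlinarith
      have : max (1 * (γ * α x - γ * β x - K)) 0 = γ * (α x - β x) - K := by
        rw [max_eq_left (by nlinarith)]; ring
      rw [this]
    have hle : v k (scale γ x) ≤ φ k (scale γ x) := by
      calc v k (scale γ x) ≤ γ * v k x + (γ - 1) * K * E := hA k hk.le γ hγ x hxC
        _ = E * (γ * (α x - β x) - K) := by rw [hvφ, hφx]; ring
        _ = φ k (scale γ x) := hφγx.symm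
    exact le_antisymm hle (hφv k hk.le _ hγx)
  constructor
  · -- the homeomorphism
    have hmemD : ∀ x ∈ C, ((α x, Ξ x) : ℝ × StateSpace d₁ d₂ d₃)
        ∈ Set.Ioi (0:ℝ) ×ˢ (Ξ '' C) := by
      intro x hx
      exact ⟨hαpos x hx, ⟨x, hx, rfl⟩⟩
    have hmemC : ∀ p : ℝ × StateSpace d₁ d₂ d₃, p ∈ Set.Ioi (0:ℝ) ×ˢ (Ξ '' C) →
        scale p.1 p.2 ∈ C := by
      rintro ⟨γ, ξ⟩ ⟨hγ, x₀, hx₀, rfl⟩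
      exact hC γ hγ _ (hΞC x₀ hx₀)
    refine ⟨{
      toFun := fun x => ⟨(α x.1, Ξ x.1), hmemD x.1 x.2⟩
      invFun := fun p => ⟨scale p.1.1 p.1.2, hmemC p.1 p.2⟩
      left_inv := by
        rintro ⟨x, hx⟩
        exact Subtype.ext (hxrec x hx)
      right_inv := by
        rintro ⟨⟨γ, ξ⟩, hγ, hξ⟩
        apply Subtype.ext
        obtain ⟨x₀, hx₀, hξeq'⟩ := hξ
        have hξeq : Ξ x₀ = ξ := hξeq'
        have hγ0 : (0:ℝ) < γ := hγ
        have hξC : ξ ∈ C := hξeq ▸ hΞC x₀ hx₀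
        have hαξ : α ξ = 1 := hξeq ▸ hαΞ x₀ hx₀
        have hΞξ : Ξ ξ = ξ := hξeq ▸ hΞΞ x₀ hx₀
        show ((α (scale γ ξ), Ξ (scale γ ξ)) : ℝ × StateSpace d₁ d₂ d₃) = (γ, ξ)
        rw [hαhom γ hγ0 _ hξC, hαξ, mul_one, hΞscale γ hγ0 _ hξC, hΞξ]
      continuous_toFun := by
        apply Continuous.subtype_mk
        apply Continuous.prodMk
        · exact hαc.restrict
        · have : (fun x : ↥C => Ξ x.1) = fun x : ↥C => scale (α x.1)⁻¹ x.1 := by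
            funext x; exact hΞ x.1 x.2
          rw [this]
          exact hscont.comp
            ((hαc.restrict.inv₀ fun x => (hαpos x.1 x.2).ne').prodMk continuous_subtype_val)
      continuous_invFun := by
        apply Continuous.subtype_mk
        exact hscont.comp
          ((continuous_fst.comp continuous_subtype_val).prodMk
            (continuous_snd.comp continuous_subtype_val))
    }, fun x => rfl⟩
  · -- the threshold structure
    intro k hk
    have hSsub : S k ⊆ C := by
      intro x hx; rw [hS k] at hx; exact hx.1
    ext x
    constructor
    · intro hxS
      have hxC : x ∈ C := hSsub hxS
      refine ⟨hxC, ?_⟩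
      rw [hfstar k hk]
      exact sInf_le ⟨x, ⟨hxS, rfl⟩, rfl⟩
    · rintro ⟨hxC, hle⟩
      have hαx : 0 < α x := hαpos x hxC
      -- any strictly larger scaling parameter gives a stopping point on the ray
      have hT : ∀ b : ℝ, 0 < b → fstar k (Ξ x) < ENNReal.ofReal b →
          scale b (Ξ x) ∈ S k := by
        intro b hb hlt
        rw [hfstar k hk] at hlt
        obtain ⟨m, ⟨x', ⟨hx'S, hΞeq⟩, rfl⟩, hmlt⟩ := sInf_lt_iff.1 hlt
        have hx'C : x' ∈ C := hSsub hx'S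
        have hα' : 0 < α x' := hαpos x' hx'C
        have hαb : α x' < b := (ENNReal.ofReal_lt_ofReal_iff hb).1 hmlt
        have h1 : (1:ℝ) ≤ b / α x' := (one_le_div hα').2 hαb.le
        have h2 := hup k hk x' hx'S (b / α x') h1
        have h3 : scale (b / α x') x' = scale b (Ξ x) := by
          rw [← hΞeq, hΞ x' hx'C, hscalemul, div_eq_mul_inv]
        rwa [h3] at h2
      rcases lt_or_eq_of_le hle with hlt | heq
      · have := hT (α x) hαx hlt
        rwa [hxrec x hxC] at this
      · -- limiting case: use continuity of `v k - φ k` on `C`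
        have hmem : ∀ b ∈ Set.Ioi (α x), scale b (Ξ x) ∈ S k := by
          intro b hb
          have hb0 : 0 < b := hαx.trans hb
          exact hT b hb0 (heq ▸ (ENNReal.ofReal_lt_ofReal_iff hb0).2 hb)
        have hg : Continuous fun b : ℝ => scale b (Ξ x) :=
          hscont.comp (continuous_id.prodMk continuous_const)
        have hmaps : Set.MapsTo (fun b : ℝ => scale b (Ξ x)) (Set.Ioi (α x)) C := by
          intro b hb
          exact hC b (hαx.trans hb) _ (hΞC x hxC)
        have hgx : (fun b : ℝ => scale b (Ξ x)) (α x) = x := hxrec x hxC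
        have hvφc : ContinuousOn (fun y => v k y - φ k y) C :=
          ((hLaMem _).1 (hvLa k hk.le)).1.sub ((hLaMem _).1 (hφLa k hk.le)).1
        have hF : ContinuousWithinAt ((fun y => v k y - φ k y) ∘ fun b : ℝ => scale b (Ξ x))
            (Set.Ioi (α x)) (α x) := by
          refine ContinuousWithinAt.comp ?_ hg.continuousWithinAt hmaps
          show ContinuousWithinAt (fun y => v k y - φ k y) C (scale (α x) (Ξ x))
          rw [hxrec x hxC]
          exact hvφc.continuousWithinAt hxC
        have hF0 : ∀ᶠ b in nhdsWithin (α x) (Set.Ioi (α x)),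
            ((fun y => v k y - φ k y) ∘ fun b : ℝ => scale b (Ξ x)) b = 0 := by
          filter_upwards [self_mem_nhdsWithin] with b hb
          have := hmem b hb
          rw [hS k] at this
          simp only [Function.comp_apply]
          rw [this.2, sub_self]
        have hlim := hF.tendsto
        have hlim0 : Filter.Tendsto ((fun y => v k y - φ k y) ∘ fun b : ℝ => scale b (Ξ x))
            (nhdsWithin (α x) (Set.Ioi (α x))) (nhds 0) := by
          exact Filter.Tendsto.congr' (Filter.EventuallyEq.symm hF0) tendsto_const_nhds
        haveI : (nhdsWithin (α x) (Set.Ioi (α x))).NeBot := nhdsGT_neBot (α x)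
        have : ((fun y => v k y - φ k y) ∘ fun b : ℝ => scale b (Ξ x)) (α x) = 0 :=
          tendsto_nhds_unique hlim hlim0
        simp only [Function.comp_apply] at this
        rw [hxrec x hxC, sub_eq_zero] at this
        rw [hS k]
        exact ⟨hxC, this⟩
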